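/- Equivalence with set covering (core of Proposition 2): the single-depot-BEB covering model is feasible, its objective F attains a minimum over all feasible configurations, and this minimum equals the set covering optimum SCP(R, I, J(·)) := min { ∑_{i∈I} u(i) : u : I → {0,1}, and for every r ∈ R there exists i ∈ J(r) with u(i) = 1 }. -/

import Mathlib

open Finset

/-- Feasibility of a configuration of the single-depot-BEB covering model, with
cyclic time horizon `T = |R| + 1`: demand at time `0`, flow conservation at the
full and empty battery states, charger capacity, and fleet size constraints. -/
def bebFeasible {R I : Type*} [Fintype R] [Fintype I]
    (χ : I → ℕ) (η : R → ℕ)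
    (w v₀ v₁ : ZMod (Fintype.card R + 1) → R → ℕ)
    (z : ZMod (Fintype.card R + 1) → R → I → ℕ) : Prop :=
  (∀ r, 1 ≤ w 0 r) ∧
  (∀ t r, w t r + v₁ t r = (∑ i, z (t - 1) r i) + v₁ (t - 1) r) ∧
  (∀ t r, (∑ i, z t r i) + v₀ t r = w (t - 1) r + v₀ (t - 1) r) ∧
  (∀ t i, ∑ r, z t r i ≤ χ i) ∧
  (∀ r, w 0 r + v₀ 0 r + v₁ 0 r + (∑ i, z 0 r i) ≤ η r)

/-- Objective value of a configuration of the single-depot-BEB covering model: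
`F = ∑_i χ(i) + |I| · ∑_r ∑_{i ∉ J(r)} ∑_t z(t,r,i)`. -/
def bebObjective {R I : Type*} [Fintype R] [Fintype I] [DecidableEq I]
    (Jr : R → Finset I) (χ : I → ℕ)
    (z : ZMod (Fintype.card R + 1) → R → I → ℕ) : ℕ :=
  (∑ i, χ i) + Fintype.card I * ∑ r, ∑ i ∈ (Jr r)ᶜ, ∑ t, z t r i

/-- The set of objective values of feasible configurations of the single-depot-BEB
covering model. -/
def bebValues {R I : Type*} [Fintype R] [Fintype I] [DecidableEq I]
    (Jr : R → Finset I) : Set ℕ :=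
  {v | ∃ (χ : I → ℕ) (η : R → ℕ)
      (w v₀ v₁ : ZMod (Fintype.card R + 1) → R → ℕ)
      (z : ZMod (Fintype.card R + 1) → R → I → ℕ),
    (∀ i, χ i ≤ 1) ∧ bebFeasible χ η w v₀ v₁ z ∧ v = bebObjective Jr χ z}

/-- The set of objective values `∑_i u(i)` of feasible set covers. -/
def bebSetCoverValues {R I : Type*} [Fintype R] [Fintype I]
    (Jr : R → Finset I) : Set ℕ :=
  {v | ∃ u : I → ℕ, (∀ i, u i ≤ 1) ∧ (∀ r, ∃ i ∈ Jr r, u i = 1) ∧ v = ∑ i, u i}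

lemma zmod_val_sub_one {n : ℕ} (t : ZMod (n+1)) :
    (t - 1).val = if t.val = 0 then n else t.val - 1 := by
  have hlt : t.val < n + 1 := ZMod.val_lt t
  rw [sub_eq_add_neg, ZMod.val_add, ZMod.val_neg_one]
  split_ifs with h
  · rw [h]; simp [Nat.mod_eq_of_lt (by omega : n < n+1)]
  · rw [show t.val + n = (t.val - 1) + 1*(n+1) by omega, Nat.add_mul_mod_self_right]
    exact Nat.mod_eq_of_lt (by omega)

lemma cover_to_config {R I : Type*} [Fintype R] [Fintype I] [DecidableEq I]
    (Jr : R → Finset I) (u : I → ℕ) (hu1 : ∀ i, u i ≤ 1)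
    (hcov : ∀ r, ∃ i ∈ Jr r, u i = 1) :
    ∃ (η : R → ℕ)
      (w v₀ v₁ : ZMod (Fintype.card R + 1) → R → ℕ)
      (z : ZMod (Fintype.card R + 1) → R → I → ℕ),
      bebFeasible u η w v₀ v₁ z ∧
      (∀ t r, ∀ i ∈ (Jr r)ᶜ, z t r i = 0) := by
  classical
  choose ir hirmem hiru using hcov
  set n := Fintype.card R with hn
  let e := Fintype.equivFin R
  let τ : R → ℕ := fun r => (e r).val + 1
  have hτ1 : ∀ r, 1 ≤ τ r := fun r => Nat.le_add_left 1 _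
  have hτn : ∀ r, τ r ≤ n := fun r => (e r).isLt
  refine ⟨fun _ => 1,
    fun t _ => if t.val = 0 then 1 else 0,
    fun t r => if 1 ≤ t.val ∧ t.val < τ r then 1 else 0,
    fun t r => if τ r < t.val then 1 else 0,
    fun t r i => if t.val = τ r ∧ i = ir r then 1 else 0, ?_, ?_⟩
  · have sumz : ∀ (t : ZMod (n+1)) r,
        (∑ i, if t.val = τ r ∧ i = ir r then 1 else 0) = if t.val = τ r then 1 else 0 := by
      intro t r
      by_cases h : t.val = τ r <;> simp [h]
    refine ⟨?_, ?_, ?_, ?_, ?_⟩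
    · intro r; simp
    · intro t r
      beta_reduce
      rw [sumz]
      have hk := ZMod.val_lt t
      have hk' := zmod_val_sub_one t
      have h1 := hτ1 r; have h2 := hτn r
      rw [hk']
      split_ifs <;> omega
    · intro t r
      beta_reduce
      rw [sumz]
      have hk := ZMod.val_lt t
      have hk' := zmod_val_sub_one t
      have h1 := hτ1 r; have h2 := hτn r
      rw [hk']
      split_ifs <;> omega
    · intro t i
      by_cases ht : t.val = 0
      · rw [Finset.sum_eq_zero]
        · exact Nat.zero_le _
        · intro r _
          have := hτ1 r
          simp only [ite_eq_right_iff, and_imp]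
          omega
      · have hk := ZMod.val_lt t
        set r₀ := e.symm ⟨t.val - 1, by omega⟩ with hr₀
        have hiff : ∀ r, (t.val = τ r) ↔ r = r₀ := by
          intro r
          constructor
          · intro h
            have : e r = ⟨t.val - 1, by omega⟩ := by
              ext; simp only [Fin.val_mk]; simp only [τ] at h; omega
            rw [← this] at hr₀; rw [hr₀]; simp
          · intro h
            subst h
            simp only [τ, r₀, Equiv.apply_symm_apply]
            omega
        have : (∑ r, if t.val = τ r ∧ i = ir r then 1 else 0)
            = ∑ r, if r = r₀ ∧ i = ir r then 1 else 0 := by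
          refine Finset.sum_congr rfl fun r _ => ?_
          simp only [hiff r]
        rw [this]
        have : (∑ r, if r = r₀ ∧ i = ir r then (1:ℕ) else 0)
            = if i = ir r₀ then 1 else 0 := by
          simp [ite_and, Finset.sum_ite_eq']
        rw [this]
        split_ifs with h
        · rw [h, hiru r₀]
        · exact Nat.zero_le _
    · intro r
      have h1 := hτ1 r
      have hz : (∑ i, if (0:ZMod (n+1)).val = τ r ∧ i = ir r then (1:ℕ) else 0) = 0 :=
        Finset.sum_eq_zero fun i _ => by
          simp only [ZMod.val_zero]
          exact if_neg (fun h => absurd h.1 (by omega))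
      beta_reduce
      rw [hz]
      simp only [ZMod.val_zero]
      split_ifs <;> omega
  · intro t r i hi
    have : i ≠ ir r := by
      intro h; rw [Finset.mem_compl] at hi; exact hi (h ▸ hirmem r)
    simp [this]

lemma config_ge_cover {R I : Type*} [Fintype R] [Fintype I] [DecidableEq I]
    (Jr : R → Finset I) (hJr : ∀ r, (Jr r).Nonempty) :
    ∀ v ∈ bebValues Jr, ∃ s ∈ bebSetCoverValues Jr, s ≤ v := by
  rintro v ⟨χ, η, w, v₀, v₁, z, hχ, ⟨h1, h2, h3, h4, h5⟩, hv⟩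
  by_cases hP : (∑ r, ∑ i ∈ (Jr r)ᶜ, ∑ t, z t r i) = 0
  · -- zero penalty: χ itself is a cover
    have hz0 : ∀ r, ∀ i ∈ (Jr r)ᶜ, ∀ t, z t r i = 0 := by
      intro r i hi t
      have hb : z t r i ≤ ∑ r, ∑ i ∈ (Jr r)ᶜ, ∑ t, z t r i := by
        calc z t r i ≤ ∑ t, z t r i :=
              Finset.single_le_sum (f := fun t => z t r i)
                (fun _ _ => Nat.zero_le _) (Finset.mem_univ t)
          _ ≤ ∑ i ∈ (Jr r)ᶜ, ∑ t, z t r i :=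
              Finset.single_le_sum (f := fun i => ∑ t, z t r i)
                (fun _ _ => Nat.zero_le _) hi
          _ ≤ ∑ r, ∑ i ∈ (Jr r)ᶜ, ∑ t, z t r i :=
              Finset.single_le_sum (f := fun r => ∑ i ∈ (Jr r)ᶜ, ∑ t, z t r i)
                (fun _ _ => Nat.zero_le _) (Finset.mem_univ r)
      omega
    have hcov : ∀ r, ∃ i ∈ Jr r, χ i = 1 := by
      intro r
      by_contra hc
      push_neg at hc
      have hr0 : ∀ i ∈ Jr r, χ i = 0 := fun i hi => by
        have := hχ i; have := hc i hi; omega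
      have hzall : ∀ t i, z t r i = 0 := by
        intro t i
        by_cases hi : i ∈ Jr r
        · have hb : z t r i ≤ χ i :=
            le_trans (Finset.single_le_sum (f := fun r => z t r i)
              (fun _ _ => Nat.zero_le _) (Finset.mem_univ r)) (h4 t i)
          have := hr0 i hi; omega
        · exact hz0 r i (Finset.mem_compl.mpr hi) t
      have e1 : ∑ t, (w t r + v₁ t r) = ∑ t, ((∑ i, z (t-1) r i) + v₁ (t-1) r) :=
        Finset.sum_congr rfl fun t _ => h2 t r
      rw [Finset.sum_add_distrib, Finset.sum_add_distrib] at e1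
      have e2 : ∑ t, (∑ i, z (t-1) r i) = 0 :=
        Finset.sum_eq_zero fun t _ => Finset.sum_eq_zero fun i _ => hzall _ i
      have e3 : ∑ t, v₁ (t-1) r = ∑ t, v₁ t r :=
        Fintype.sum_equiv (Equiv.subRight (1 : ZMod _)) _ _ (fun t => rfl)
      rw [e2, e3] at e1
      have hw0 : w 0 r ≤ ∑ t, w t r :=
        Finset.single_le_sum (f := fun t => w t r)
          (fun _ _ => Nat.zero_le _) (Finset.mem_univ (0 : ZMod (Fintype.card R + 1)))
      have := h1 r
      omega
    refine ⟨∑ i, χ i, ⟨χ, hχ, hcov, rfl⟩, ?_⟩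
    rw [hv]
    unfold bebObjective
    rw [hP, Nat.mul_zero, Nat.add_zero]
  · -- positive penalty: all-ones cover has smaller value
    refine ⟨∑ i, (1:ℕ), ⟨fun _ => 1, fun _ => le_refl 1,
      fun r => ⟨(hJr r).choose, (hJr r).choose_spec, rfl⟩, rfl⟩, ?_⟩
    rw [hv]
    unfold bebObjective
    have hle : Fintype.card I ≤
        Fintype.card I * ∑ r, ∑ i ∈ (Jr r)ᶜ, ∑ t, z t r i :=
      Nat.le_mul_of_pos_right _ (by omega)
    calc ∑ i, (1:ℕ) = Fintype.card I := by simp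
      _ ≤ Fintype.card I * ∑ r, ∑ i ∈ (Jr r)ᶜ, ∑ t, z t r i := hle
      _ ≤ _ := Nat.le_add_left _ _

/-- Core of Proposition 2: the single-depot-BEB covering model is feasible, its
objective attains a minimum over all feasible configurations, and this minimum
equals the set covering optimum. -/
theorem beb_eq_setcover
    {R I : Type*} [Fintype R] [Fintype I] [DecidableEq I]
    [Nonempty R] [Nonempty I]
    (Jr : R → Finset I) (hJr : ∀ r, (Jr r).Nonempty) :
    (bebValues Jr).Nonempty ∧
      sInf (bebValues Jr) ∈ bebValues Jr ∧
      sInf (bebValues Jr) = sInf (bebSetCoverValues Jr) := by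
  have scne : (bebSetCoverValues Jr).Nonempty :=
    ⟨Fintype.card I, fun _ => 1, fun _ => le_refl 1,
      fun r => ⟨(hJr r).choose, (hJr r).choose_spec, rfl⟩, by simp⟩
  have hsub : bebSetCoverValues Jr ⊆ bebValues Jr := by
    rintro v ⟨u, hu1, hcov, rfl⟩
    obtain ⟨η, w, v₀, v₁, z, hfeas, hz⟩ := cover_to_config Jr u hu1 hcov
    refine ⟨u, η, w, v₀, v₁, z, hu1, hfeas, ?_⟩
    unfold bebObjective
    have hzz : ∑ r, ∑ i ∈ (Jr r)ᶜ, ∑ t, z t r i = 0 :=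
      Finset.sum_eq_zero fun r _ => Finset.sum_eq_zero fun i hi =>
        Finset.sum_eq_zero fun t _ => hz t r i hi
    rw [hzz, Nat.mul_zero, Nat.add_zero]
  have hne : (bebValues Jr).Nonempty := scne.mono hsub
  have hmem : sInf (bebValues Jr) ∈ bebValues Jr := Nat.sInf_mem hne
  refine ⟨hne, hmem, le_antisymm ?_ ?_⟩
  · exact Nat.sInf_le (hsub (Nat.sInf_mem scne))
  · obtain ⟨s, hs, hle⟩ := config_ge_cover Jr hJr _ hmem
    exact le_trans (Nat.sInf_le hs) hle
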